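/- arXiv:2404.03672 — 2 statements merged into one kernel-verified Lean document; each statement's English description precedes it below -/
import Mathlib

section
/- If ξ̄ ∈ Ω satisfies E(ξ̄) ≤ c, then for every i = 1, …, m-1 one has ξᵢ - ξ_{i+1} ≥ aᵢ e^{-c/α}, where α = min_{1 ≤ i ≤ m-1} kᵢ(u_{i+1} - uᵢ) > 0. -/
noncomputable def F (ξ : ℝ) : ℝ :=
  (1 / Real.sqrt Real.pi) * ∫ s in (0:ℝ)..ξ, Real.exp (-s ^ 2 / 4)

/-- Extension of `ξ = (ξ₁, …, ξₘ)` to indices `0, …, m+1`, with the convention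
`ξ_{m+1} = 0` (the value at index `0` is irrelevant: there `F(ξ₀/a₀) = F(+∞) = 1`). -/
def ext (m : ℕ) (ξ : Fin m → ℝ) : ℕ → ℝ :=
  fun i => if h : 1 ≤ i ∧ i ≤ m then ξ ⟨i - 1, by omega⟩ else 0

/-- The Stefan–Dirichlet potential
`E(ξ̄) = -∑_{i=0}^m kᵢ(u_{i+1}-uᵢ) ln(F(ξᵢ/aᵢ) - F(ξ_{i+1}/aᵢ)) + ∑_{i=1}^m dᵢξᵢ²/4`,
with conventions `F(ξ₀/a₀) = 1`, `ξ_{m+1} = 0` (so `F(ξ_{m+1}/aₘ) = 0`). -/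
noncomputable def E (m : ℕ) (u k a d : ℕ → ℝ) (ξ : Fin m → ℝ) : ℝ :=
  (∑ i ∈ Finset.range (m + 1),
    -(k i * (u (i + 1) - u i) *
      Real.log ((if i = 0 then 1 else F (ext m ξ i / a i)) - F (ext m ξ (i + 1) / a i))))
  + ∑ i ∈ Finset.Icc 1 m, d i * (ext m ξ i) ^ 2 / 4

/-- The domain `Ω = {ξ₁ > ξ₂ > ⋯ > ξₘ > 0}`. -/
def Omega (m : ℕ) : Set (Fin m → ℝ) := {ξ | StrictAnti ξ ∧ ∀ i, 0 < ξ i}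

section Flemmas
open Real intervalIntegral MeasureTheory

lemma gauss_cont : Continuous (fun s : ℝ => Real.exp (-s ^ 2 / 4)) := by
  continuity

lemma gauss_intInt (x y : ℝ) :
    IntervalIntegrable (fun s : ℝ => Real.exp (-s ^ 2 / 4)) volume x y :=
  gauss_cont.intervalIntegrable x y

lemma F_sub (x y : ℝ) :
    F x - F y = (1 / Real.sqrt Real.pi) * ∫ s in y..x, Real.exp (-s ^ 2 / 4) := by
  rw [F, F, ← mul_sub, integral_interval_sub_left (gauss_intInt 0 x) (gauss_intInt 0 y)]

lemma sqrtpi_pos : 0 < Real.sqrt Real.pi := Real.sqrt_pos.2 Real.pi_pos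

lemma F_sub_pos {x y : ℝ} (h : y < x) : 0 < F x - F y := by
  rw [F_sub]
  apply mul_pos (by positivity)
  exact intervalIntegral_pos_of_pos_on (gauss_intInt y x)
    (fun s _ => Real.exp_pos _) h

lemma F_sub_nonneg {x y : ℝ} (h : y ≤ x) : 0 ≤ F x - F y := by
  rcases eq_or_lt_of_le h with rfl | h
  · simp
  · exact (F_sub_pos h).le

lemma F_zero : F 0 = 0 := by simp [F]

lemma F_nonneg {x : ℝ} (hx : 0 ≤ x) : 0 ≤ F x := by
  have := F_sub_nonneg hx
  rwa [F_zero, sub_zero] at this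

lemma F_sub_le {x y : ℝ} (h : y ≤ x) : F x - F y ≤ x - y := by
  rw [F_sub]
  have h1 : (∫ s in y..x, Real.exp (-s ^ 2 / 4)) ≤ ∫ s in y..x, (1:ℝ) := by
    apply integral_mono_on h (gauss_intInt y x) intervalIntegrable_const
    intro s _
    rw [← Real.exp_zero]
    apply Real.exp_le_exp.2
    nlinarith [sq_nonneg s]
  have h2 : (∫ s in y..x, (1:ℝ)) = x - y := by simp
  have h3 : 1 / Real.sqrt Real.pi ≤ 1 := by
    rw [div_le_one sqrtpi_pos]
    have : (1:ℝ) = Real.sqrt 1 := by simp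
    rw [this]
    exact Real.sqrt_le_sqrt (by linarith [Real.pi_gt_three])
  calc (1 / Real.sqrt Real.pi) * ∫ s in y..x, Real.exp (-s ^ 2 / 4)
      ≤ 1 * (x - y) := by
        apply mul_le_mul h3 (h1.trans_eq h2) ?_ one_pos.le
        apply intervalIntegral.integral_nonneg h
        intro s _; exact (Real.exp_pos _).le
    _ = x - y := one_mul _

lemma F_le_one {x : ℝ} (hx : 0 ≤ x) : F x ≤ 1 := by
  have hint : IntegrableOn (fun s : ℝ => Real.exp (-s ^ 2 / 4)) (Set.Ioi 0) volume := by
    have := (integrable_exp_neg_mul_sq (b := (1/4 : ℝ)) (by norm_num)).integrableOn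
      (s := Set.Ioi (0:ℝ))
    apply this.congr_fun ?_ measurableSet_Ioi
    intro s _; ring_nf
  have hI : (∫ s in (0:ℝ)..x, Real.exp (-s ^ 2 / 4))
      ≤ ∫ s in Set.Ioi (0:ℝ), Real.exp (-s ^ 2 / 4) := by
    rw [intervalIntegral.integral_of_le hx]
    apply setIntegral_mono_set hint
    · filter_upwards with s using (Real.exp_pos _).le
    · exact Filter.Eventually.of_forall Set.Ioc_subset_Ioi_self
  have hG : (∫ s in Set.Ioi (0:ℝ), Real.exp (-s ^ 2 / 4)) = Real.sqrt Real.pi := by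
    have h := integral_gaussian_Ioi (1/4 : ℝ)
    have : (∫ s in Set.Ioi (0:ℝ), Real.exp (-s ^ 2 / 4))
        = ∫ s in Set.Ioi (0:ℝ), Real.exp (-(1/4 : ℝ) * s ^ 2) := by
      congr 1; ext s; ring_nf
    rw [this, h]
    rw [show Real.pi / (1/4 : ℝ) = 4 * Real.pi by ring]
    rw [show (4 : ℝ) * Real.pi = 2^2 * Real.pi by ring, Real.sqrt_mul (by positivity),
      Real.sqrt_sq (by norm_num)]
    ring
  rw [F]
  calc (1 / Real.sqrt Real.pi) * ∫ s in (0:ℝ)..x, Real.exp (-s ^ 2 / 4)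
      ≤ (1 / Real.sqrt Real.pi) * Real.sqrt Real.pi := by
        apply mul_le_mul_of_nonneg_left (hI.trans_eq hG) (by positivity)
    _ = 1 := by field_simp

end Flemmas

theorem E_sublevel_gap (m : ℕ) (hm : 1 ≤ m) (u k a d : ℕ → ℝ)
    (hk : ∀ i ≤ m, 0 < k i) (ha : ∀ i ≤ m, 0 < a i)
    (hd : ∀ i, 1 ≤ i → i ≤ m → 0 ≤ d i)
    (hu0 : u 0 ≤ u 1) (hu : ∀ i, 1 ≤ i → i ≤ m → u i < u (i + 1))
    (hd1 : u 0 = u 1 → 0 < d 1) (hm2 : 2 ≤ m) (c : ℝ)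
    (ξ : Fin m → ℝ) (hξ : ξ ∈ Omega m) (hE : E m u k a d ξ ≤ c) :
    ∀ i, 1 ≤ i → i ≤ m - 1 →
      a i * Real.exp (-c / ((Finset.Icc 1 (m - 1)).inf'
          (Finset.nonempty_Icc.mpr (by omega)) (fun j => k j * (u (j + 1) - u j))))
        ≤ ext m ξ i - ext m ξ (i + 1) := by
  obtain ⟨hanti, hpos0⟩ := hξ
  -- basic facts about ext
  have hpos : ∀ j, 1 ≤ j → j ≤ m → 0 < ext m ξ j := by
    intro j h1 h2
    simp only [ext, dif_pos (And.intro h1 h2)]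
    exact hpos0 _
  have hge0 : ∀ j, 0 ≤ ext m ξ j := by
    intro j
    by_cases h : 1 ≤ j ∧ j ≤ m
    · exact (hpos j h.1 h.2).le
    · simp [ext, h]
  have hlt : ∀ j, 1 ≤ j → j ≤ m → ext m ξ (j + 1) < ext m ξ j := by
    intro j h1 h2
    by_cases h : j + 1 ≤ m
    · simp only [ext, dif_pos (And.intro h1 h2),
        dif_pos (show 1 ≤ j + 1 ∧ j + 1 ≤ m by omega)]
      exact hanti (show (⟨j - 1, by omega⟩ : Fin m) < ⟨j + 1 - 1, by omega⟩ by
        simp [Fin.lt_def]; omega)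
    · have : ext m ξ (j + 1) = 0 := by simp [ext]; omega
      rw [this]; exact hpos j h1 h2
  -- each summand of the first sum is nonneg
  set T : ℕ → ℝ := fun j =>
    -(k j * (u (j + 1) - u j) *
      Real.log ((if j = 0 then 1 else F (ext m ξ j / a j)) - F (ext m ξ (j + 1) / a j)))
    with hT
  have hTnn : ∀ j ∈ Finset.range (m + 1), 0 ≤ T j := by
    intro j hj
    rw [Finset.mem_range] at hj
    have hkj : 0 < k j := hk j (by omega)
    have haj : 0 < a j := ha j (by omega)
    have hargnn : 0 ≤ ext m ξ (j + 1) / a j := div_nonneg (hge0 _) haj.le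
    rcases Nat.eq_zero_or_pos j with rfl | hj1
    · have hlog : Real.log (1 - F (ext m ξ 1 / a 0)) ≤ 0 :=
        Real.log_nonpos (by linarith [F_le_one hargnn]) (by linarith [F_nonneg hargnn])
      simp only [hT, if_pos rfl]
      have : k 0 * (u 1 - u 0) * Real.log (1 - F (ext m ξ 1 / a 0)) ≤ 0 :=
        mul_nonpos_of_nonneg_of_nonpos (by nlinarith) hlog
      simpa using this
    · have hj2 : j ≤ m := by omega
      have hx : ext m ξ (j + 1) / a j ≤ ext m ξ j / a j := by
        gcongr
        exact (hlt j hj1 hj2).le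
      have hdnn : 0 ≤ F (ext m ξ j / a j) - F (ext m ξ (j + 1) / a j) := F_sub_nonneg hx
      have hdle : F (ext m ξ j / a j) - F (ext m ξ (j + 1) / a j) ≤ 1 := by
        have h1 := F_le_one (le_trans hargnn hx)
        have h2 := F_nonneg hargnn
        linarith
      have hlog : Real.log (F (ext m ξ j / a j) - F (ext m ξ (j + 1) / a j)) ≤ 0 :=
        Real.log_nonpos hdnn hdle
      simp only [hT, if_neg (by omega : ¬ j = 0)]
      have hΔ : 0 < u (j + 1) - u j := sub_pos.2 (hu j hj1 hj2)
      have h := mul_nonpos_of_nonneg_of_nonpos (mul_nonneg hkj.le hΔ.le) hlog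
      linarith
  intro i hi1 hi2
  have him : i ≤ m := by omega
  have hi1m : i + 1 ≤ m := by omega
  set α := (Finset.Icc 1 (m - 1)).inf'
      (Finset.nonempty_Icc.mpr (by omega)) (fun j => k j * (u (j + 1) - u j)) with hα
  have hαpos : 0 < α := by
    rw [hα, Finset.lt_inf'_iff]
    intro j hj
    rw [Finset.mem_Icc] at hj
    exact mul_pos (hk j (by omega)) (sub_pos.2 (hu j hj.1 (by omega)))
  have hαle : α ≤ k i * (u (i + 1) - u i) :=
    Finset.inf'_le _ (Finset.mem_Icc.mpr ⟨hi1, hi2⟩)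
  -- the single term bound
  have hTi : T i ≤ c := by
    have h1 : T i ≤ ∑ j ∈ Finset.range (m + 1), T j :=
      Finset.single_le_sum hTnn (Finset.mem_range.2 (by omega))
    have h2 : (0:ℝ) ≤ ∑ j ∈ Finset.Icc 1 m, d j * (ext m ξ j) ^ 2 / 4 := by
      apply Finset.sum_nonneg
      intro j hj
      rw [Finset.mem_Icc] at hj
      have := hd j hj.1 hj.2
      positivity
    have : E m u k a d ξ = (∑ j ∈ Finset.range (m + 1), T j)
        + ∑ j ∈ Finset.Icc 1 m, d j * (ext m ξ j) ^ 2 / 4 := rfl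
    linarith [hE, this ▸ hE]
  -- analyze term i
  have haj : 0 < a i := ha i (by omega)
  have hx : ext m ξ (i + 1) / a i < ext m ξ i / a i := by
    gcongr
    exact hlt i hi1 him
  have hdpos : 0 < F (ext m ξ i / a i) - F (ext m ξ (i + 1) / a i) := F_sub_pos hx
  have hargnn : 0 ≤ ext m ξ (i + 1) / a i := div_nonneg (hge0 _) haj.le
  have hdle : F (ext m ξ i / a i) - F (ext m ξ (i + 1) / a i) ≤ 1 := by
    have h1 := F_le_one (le_trans hargnn hx.le)
    have h2 := F_nonneg hargnn
    linarith
  set D := F (ext m ξ i / a i) - F (ext m ξ (i + 1) / a i) with hD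
  have hlog : Real.log D ≤ 0 := Real.log_nonpos hdpos.le hdle
  -- from T i ≤ c : k i * Δ * log D ≥ -c
  have hTi' : k i * (u (i + 1) - u i) * (-Real.log D) ≤ c := by
    have : T i = k i * (u (i + 1) - u i) * (-Real.log D) := by
      simp only [hT, if_neg (by omega : ¬ i = 0)]
      ring
    linarith [this ▸ hTi]
  have hstep : α * (-Real.log D) ≤ c := by
    have := mul_le_mul_of_nonneg_right hαle (neg_nonneg.2 hlog)
    linarith
  have hlogD : -c / α ≤ Real.log D := by
    rw [div_le_iff₀ hαpos] at *
    nlinarith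
  have hexp : Real.exp (-c / α) ≤ D := by
    calc Real.exp (-c / α) ≤ Real.exp (Real.log D) := Real.exp_le_exp.2 hlogD
      _ = D := Real.exp_log hdpos
  have hlip : D ≤ ext m ξ i / a i - ext m ξ (i + 1) / a i := F_sub_le hx.le
  have : Real.exp (-c / α) ≤ (ext m ξ i - ext m ξ (i + 1)) / a i := by
    rw [div_sub_div_same] at hlip
    linarith
  calc a i * Real.exp (-c / α) ≤ a i * ((ext m ξ i - ext m ξ (i + 1)) / a i) :=
        mul_le_mul_of_nonneg_left this haj.le
    _ = ext m ξ i - ext m ξ (i + 1) := by field_simp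
end

section
/- The function u(ξ) = u₀ + a₀ b_N √π (F(ξ/a₀) - 1) satisfies u'(0) = b_N, lim_{ξ→+∞} u(ξ) = u₀, u(0) = u₀ - a₀ b_N √π, and solves a² u'' = -(ξ/2) u' on (0, ∞) with a = a₀. -/
lemma cont_integrand : Continuous fun s : ℝ => Real.exp (-s ^ 2 / 4) := by
  continuity

lemma hasDerivF (x : ℝ) :
    HasDerivAt F ((1 / Real.sqrt Real.pi) * Real.exp (-x ^ 2 / 4)) x := by
  have h : HasDerivAt (fun ξ => ∫ s in (0:ℝ)..ξ, Real.exp (-s ^ 2 / 4))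
      (Real.exp (-x ^ 2 / 4)) x :=
    intervalIntegral.integral_hasDerivAt_right
      (cont_integrand.intervalIntegrable 0 x)
      (cont_integrand.stronglyMeasurableAtFilter _ _)
      cont_integrand.continuousAt
  exact h.const_mul _

lemma F_tendsto : Filter.Tendsto F Filter.atTop (nhds 1) := by
  have hint : MeasureTheory.Integrable (fun s : ℝ => Real.exp (-s ^ 2 / 4))
      (MeasureTheory.volume.restrict (Set.Ioi 0)) := by
    have := (integrable_exp_neg_mul_sq (by norm_num : (0:ℝ) < 1/4)).restrict
      (s := Set.Ioi 0)
    convert this using 2 with s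
    ring_nf
  have h1 : Filter.Tendsto (fun ξ => ∫ s in (0:ℝ)..ξ, Real.exp (-s ^ 2 / 4))
      Filter.atTop (nhds (∫ s in Set.Ioi (0:ℝ), Real.exp (-s ^ 2 / 4))) :=
    MeasureTheory.intervalIntegral_tendsto_integral_Ioi 0 hint Filter.tendsto_id
  have hval : (∫ s in Set.Ioi (0:ℝ), Real.exp (-s ^ 2 / 4)) = Real.sqrt Real.pi := by
    have h4 : (∫ s in Set.Ioi (0:ℝ), Real.exp (-(1/4) * s ^ 2))
        = Real.sqrt (Real.pi / (1/4)) / 2 := integral_gaussian_Ioi (1/4)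
    have : (∫ s in Set.Ioi (0:ℝ), Real.exp (-s ^ 2 / 4))
        = ∫ s in Set.Ioi (0:ℝ), Real.exp (-(1/4) * s ^ 2) := by
      congr 1; ext s; ring_nf
    rw [this, h4]
    rw [show Real.pi / (1/4) = 4 * Real.pi by ring,
      show (4:ℝ) = 2 ^ 2 by norm_num, Real.sqrt_mul (by positivity),
      Real.sqrt_sq (by norm_num : (0:ℝ) ≤ 2)]
    ring
  have hπ : Real.sqrt Real.pi ≠ 0 := by positivity
  have := h1.const_mul (1 / Real.sqrt Real.pi)
  rw [hval] at this
  have heq : (1 / Real.sqrt Real.pi) * Real.sqrt Real.pi = 1 := by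
    field_simp
  unfold F
  simpa [one_div, inv_mul_cancel₀ hπ] using this

theorem type_zero_solution (a₀ bN u₀ : ℝ) (ha : 0 < a₀) (hb : bN < 0) :
    let v : ℝ → ℝ := fun ξ => u₀ + a₀ * bN * Real.sqrt Real.pi * (F (ξ / a₀) - 1)
    deriv v 0 = bN ∧
    Filter.Tendsto v Filter.atTop (nhds u₀) ∧
    v 0 = u₀ - a₀ * bN * Real.sqrt Real.pi ∧
    ∀ ξ ∈ Set.Ioi (0:ℝ), a₀ ^ 2 * deriv (deriv v) ξ = -(ξ / 2) * deriv v ξ := by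
  intro v
  have ha' : a₀ ≠ 0 := ne_of_gt ha
  have hπ : Real.sqrt Real.pi ≠ 0 := by positivity
  have hvderiv : ∀ x, HasDerivAt v (bN * Real.exp (-(x / a₀) ^ 2 / 4)) x := by
    intro x
    have hdiv : HasDerivAt (fun ξ : ℝ => ξ / a₀) (1 / a₀) x := by
      simpa using (hasDerivAt_id x).div_const a₀
    have hcomp := (hasDerivF (x / a₀)).comp x hdiv
    have h1 : HasDerivAt (fun ξ => u₀ + a₀ * bN * Real.sqrt Real.pi * (F (ξ / a₀) - 1))
        (a₀ * bN * Real.sqrt Real.pi *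
          ((1 / Real.sqrt Real.pi) * Real.exp (-(x / a₀) ^ 2 / 4) * (1 / a₀))) x :=
      ((hcomp.sub_const 1).const_mul _).const_add _
    convert h1 using 1
    field_simp
  have hd : deriv v = fun x => bN * Real.exp (-(x / a₀) ^ 2 / 4) := by
    funext x; exact (hvderiv x).deriv
  refine ⟨?_, ?_, ?_, ?_⟩
  · rw [hd]; simp
  · have htend : Filter.Tendsto (fun ξ : ℝ => ξ / a₀) Filter.atTop Filter.atTop :=
      Filter.tendsto_id.atTop_div_const ha
    have := ((F_tendsto.comp htend).sub_const 1).const_mul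
      (a₀ * bN * Real.sqrt Real.pi)
    have := this.const_add u₀
    simpa using this
  · show u₀ + a₀ * bN * Real.sqrt Real.pi * (F (0 / a₀) - 1) = _
    have : F 0 = 0 := by unfold F; simp
    simp [this]
    ring
  · intro ξ hξ
    rw [hd]
    have hg : HasDerivAt (fun x => bN * Real.exp (-(x / a₀) ^ 2 / 4))
        (bN * (Real.exp (-(ξ / a₀) ^ 2 / 4) * (-ξ / (2 * a₀ ^ 2)))) ξ := by
      have hinner : HasDerivAt (fun x : ℝ => -(x / a₀) ^ 2 / 4) (-ξ / (2 * a₀ ^ 2)) ξ := by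
        have hdiv : HasDerivAt (fun x : ℝ => x / a₀) (1 / a₀) ξ := by
          simpa using (hasDerivAt_id ξ).div_const a₀
        have : HasDerivAt (fun x : ℝ => -(x / a₀) ^ 2 / 4) (-((2:ℕ) * (ξ / a₀) ^ (2 - 1) * (1 / a₀)) / 4) ξ :=
          ((hdiv.pow 2).neg).div_const 4
        convert this using 1
        field_simp
        ring_nf
        simp [ha']
      exact (hinner.exp.const_mul bN)
    rw [hg.deriv]
    field_simp
end
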